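/- arXiv:1705.06815 — 3 statements merged into one kernel-verified Lean document; each statement's English description precedes it below -/
import Mathlib

section
/- Fix an integer r ≥ 2, a real α ∈ [0,1), and let φ_α ∈ [0,α) be the unique solution of φ - φ^r/r = α(1-1/r). Then for every β with φ_α < β ≤ 1, one has (β - α(1-1/r))/β^r ≥ 1/r. -/
lemma pow_sub_pow_le_aux (n : ℕ) (φ β : ℝ) (h0 : 0 ≤ φ) (h1 : φ ≤ β) (h2 : β ≤ 1) :
    β ^ n - φ ^ n ≤ n * (β - φ) := by
  induction n with
  | zero => simp
  | succ n ih =>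
    have hb0 : 0 ≤ β := le_trans h0 h1
    have hbn : β ^ n ≤ 1 := pow_le_one₀ hb0 h2
    have hpn : 0 ≤ φ ^ n := pow_nonneg h0 n
    have hpb : φ ^ n ≤ β ^ n := pow_le_pow_left₀ h0 h1 n
    rw [pow_succ, pow_succ]
    push_cast
    nlinarith [mul_le_mul_of_nonneg_left ih hb0, mul_nonneg hpn (sub_nonneg.2 h1),
      mul_le_of_le_one_right (sub_nonneg.2 hpb) h2]

theorem ratio_ge_one_div_r (r : ℕ) (hr : 2 ≤ r) (α φ β : ℝ)
    (hα0 : 0 ≤ α) (hα1 : α < 1)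
    (hφ : φ ∈ Set.Ico 0 α) (hφeq : φ - φ ^ r / r = α * (1 - 1 / r))
    (hβ1 : φ < β) (hβ2 : β ≤ 1) :
    (β - α * (1 - 1 / r)) / β ^ r ≥ 1 / r := by
  obtain ⟨hφ0, hφα⟩ := hφ
  have hr0 : (0:ℝ) < r := by
    have : (0:ℕ) < r := by omega
    exact_mod_cast this
  have hβ0 : 0 < β := lt_of_le_of_lt hφ0 hβ1
  have hkey : β ^ r - φ ^ r ≤ r * (β - φ) :=
    pow_sub_pow_le_aux r φ β hφ0 hβ1.le hβ2
  have heq : α * (1 - 1 / r) * r = r * φ - φ ^ r := by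
    field_simp at hφeq ⊢
    linarith
  rw [ge_iff_le, div_le_div_iff₀ hr0 (by positivity)]
  nlinarith
end

section
/- Fix an integer r ≥ 2 and reals 0 < β' < β ≤ 1. Define g(β') = ((β^r - β'^r)/(r β'^{r-1})) · log(e β'^{r-1}) + (r-2)(β - β') - (r-1)(β log β - β' log β'). Then g(β') < 0. -/
open Real

private lemma hasDerivG (m : ℕ) (β x : ℝ) (hx0 : 0 < x) :
    HasDerivAt (fun x : ℝ =>
      ((β ^ (m + 2) - x ^ (m + 2)) / ((↑(m + 2) : ℝ) * x ^ (m + 1))) *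
        Real.log (Real.exp 1 * x ^ (m + 1))
      + ((↑(m + 2) : ℝ) - 2) * (β - x)
      - ((↑(m + 2) : ℝ) - 1) * (β * Real.log β - x * Real.log x))
    ((((m : ℝ) + 1) ^ 2 * (β ^ (m + 2) - x ^ (m + 2)) * (-Real.log x)) /
      (((m : ℝ) + 2) * x ^ (m + 2))) x := by
  have xne : x ≠ 0 := hx0.ne'
  have hnum : HasDerivAt (fun x : ℝ => β ^ (m + 2) - x ^ (m + 2))
      (-(↑(m + 2) * x ^ (m + 1))) x := (hasDerivAt_pow (m + 2) x).const_sub (β ^ (m + 2))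
  have hden : HasDerivAt (fun x : ℝ => (↑(m + 2) : ℝ) * x ^ (m + 1))
      ((↑(m + 2) : ℝ) * (↑(m + 1) * x ^ m)) x :=
    (hasDerivAt_pow (m + 1) x).const_mul _
  have hdenne : (↑(m + 2) : ℝ) * x ^ (m + 1) ≠ 0 := by positivity
  have hQ := hnum.div hden hdenne
  have hinner : HasDerivAt (fun x : ℝ => Real.exp 1 * x ^ (m + 1))
      (Real.exp 1 * (↑(m + 1) * x ^ m)) x := (hasDerivAt_pow (m + 1) x).const_mul _
  have hLne : Real.exp 1 * x ^ (m + 1) ≠ 0 := by positivity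
  have hL := hinner.log hLne
  have hP := hQ.mul hL
  have hlin : HasDerivAt (fun x : ℝ => ((↑(m + 2) : ℝ) - 2) * (β - x))
      (((↑(m + 2) : ℝ) - 2) * (-1)) x := ((hasDerivAt_id x).const_sub β).const_mul _
  have hxlog : HasDerivAt (fun x : ℝ => x * Real.log x)
      (1 * Real.log x + x * x⁻¹) x := (hasDerivAt_id x).mul (Real.hasDerivAt_log xne)
  have hlast : HasDerivAt (fun x : ℝ => ((↑(m + 2) : ℝ) - 1) * (β * Real.log β - x * Real.log x))
      (((↑(m + 2) : ℝ) - 1) * -(1 * Real.log x + x * x⁻¹)) x :=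
    (hxlog.const_sub _).const_mul _
  have htot := (hP.add hlin).sub hlast
  convert htot using 1
  case e'_4 => rfl
  case e'_5 => rfl
  case e'_8 => rfl
  rw [Real.log_mul (Real.exp_ne_zero 1) (pow_ne_zero _ xne), Real.log_exp, Real.log_pow]
  simp only [Pi.div_apply]
  push_cast
  field_simp
  ring

theorem diag_coincide_neg (r : ℕ) (hr : 2 ≤ r) (β' β : ℝ)
    (h0 : 0 < β') (h1 : β' < β) (h2 : β ≤ 1) :
    ((β ^ r - β' ^ r) / (r * β' ^ (r - 1))) * Real.log (Real.exp 1 * β' ^ (r - 1))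
      + ((r : ℝ) - 2) * (β - β')
      - ((r : ℝ) - 1) * (β * Real.log β - β' * Real.log β') < 0 := by
  obtain ⟨m, rfl⟩ : ∃ m, r = m + 2 := ⟨r - 2, by omega⟩
  set G : ℝ → ℝ := fun x =>
    ((β ^ (m + 2) - x ^ (m + 2)) / ((↑(m + 2) : ℝ) * x ^ (m + 1))) *
        Real.log (Real.exp 1 * x ^ (m + 1))
      + ((↑(m + 2) : ℝ) - 2) * (β - x)
      - ((↑(m + 2) : ℝ) - 1) * (β * Real.log β - x * Real.log x) with hG
  have hcont : ContinuousOn G (Set.Icc β' β) := fun x hx =>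
    ((hasDerivG m β x (lt_of_lt_of_le h0 hx.1)).continuousAt).continuousWithinAt
  have hmono : StrictMonoOn G (Set.Icc β' β) := by
    apply strictMonoOn_of_deriv_pos (convex_Icc β' β) hcont
    intro x hx
    rw [interior_Icc] at hx
    have hx0 : 0 < x := h0.trans hx.1
    have hx1 : x < 1 := lt_of_lt_of_le hx.2 h2
    rw [(hasDerivG m β x hx0).deriv]
    have hlog : 0 < -Real.log x := by
      have := Real.log_neg hx0 hx1
      linarith
    have hpow : x ^ (m + 2) < β ^ (m + 2) :=
      pow_lt_pow_left₀ hx.2 hx0.le (by omega)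
    have h1' : (0:ℝ) < ((m : ℝ) + 1) ^ 2 * (β ^ (m + 2) - x ^ (m + 2)) * (-Real.log x) := by
      apply mul_pos (mul_pos (by positivity) (by linarith)) hlog
    exact div_pos h1' (by positivity)
  have key : G β' < G β :=
    hmono (Set.left_mem_Icc.2 h1.le) (Set.right_mem_Icc.2 h1.le) h1
  have hGβ : G β = 0 := by simp [hG]
  have : G β' < 0 := hGβ ▸ key
  exact this
end

section
/- Let m ≥ 1 be an integer, x_0 < x_1 < ⋯ < x_m evenly spaced reals, and σ : X × X × ℝ → ℝ (X = {x_0,…,x_m}) with continuous partial derivative σ_w in the third argument. For a,b ∈ ℝ, let F be the set of functions f : X → ℝ with f(x_0) = a and f(x_m) = b, and define J(f) = Σ_{i=0}^{m-1} σ(x_i, x_{i+1}, Δf_i/Δx_i) Δx_i where Δf_i = f(x_{i+1}) - f(x_i) and Δx_i = x_{i+1} - x_i. If f̂ is a local extremum of J on F (identifying F with ℝ^{m-1} via the interior values), then there exists c ∈ ℝ such that σ_w(x_i, x_{i+1}, Δf̂_i/Δx_i) = c for all 0 ≤ i < m. -/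
/-- Discrete Euler–Lagrange equation (Guseinov): at a local extremum of the
discrete action `J`, the conjugate momentum `σw` is constant along the extremal. -/
theorem discrete_euler_lagrange (m : ℕ) (hm : 1 ≤ m) (d : ℝ) (hd : 0 < d)
    (x : ℕ → ℝ) (hx : ∀ i, i ≤ m → x i = x 0 + i * d)
    (σ σw : ℝ → ℝ → ℝ → ℝ)
    (hσ : ∀ s t w, HasDerivAt (σ s t) (σw s t w) w)
    (hσw : ∀ s t, Continuous (σw s t))
    (a b : ℝ) (f : ℕ → ℝ) (hfa : f 0 = a) (hfb : f m = b)
    (hext : ∃ ε > 0,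
      (∀ g : ℕ → ℝ, g 0 = a → g m = b → (∀ i, i ≤ m → |g i - f i| < ε) →
        (∑ i ∈ Finset.range m, σ (x i) (x (i + 1)) ((g (i + 1) - g i) / d) * d)
          ≤ ∑ i ∈ Finset.range m, σ (x i) (x (i + 1)) ((f (i + 1) - f i) / d) * d) ∨
      (∀ g : ℕ → ℝ, g 0 = a → g m = b → (∀ i, i ≤ m → |g i - f i| < ε) →
        (∑ i ∈ Finset.range m, σ (x i) (x (i + 1)) ((f (i + 1) - f i) / d) * d)
          ≤ ∑ i ∈ Finset.range m, σ (x i) (x (i + 1)) ((g (i + 1) - g i) / d) * d)) :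
    ∃ c : ℝ, ∀ i, i < m → σw (x i) (x (i + 1)) ((f (i + 1) - f i) / d) = c := by
  obtain ⟨ε, hε, hcase⟩ := hext
  set A : ℕ → ℝ := fun i => σw (x i) (x (i + 1)) ((f (i + 1) - f i) / d) with hA
  have key : ∀ j, j + 1 < m → A j = A (j + 1) := by
    intro j hj
    set k := j + 1 with hk
    set g : ℝ → ℕ → ℝ := fun t i => f i + if i = k then t else 0 with hg
    set S : ℝ → ℝ := fun t =>
      ∑ i ∈ Finset.range m, σ (x i) (x (i + 1)) ((g t (i + 1) - g t i) / d) * d with hS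
    have hS0 : S 0 = ∑ i ∈ Finset.range m, σ (x i) (x (i + 1)) ((f (i + 1) - f i) / d) * d := by
      simp [hS, hg]
    -- derivative of S at 0
    set D : ℝ := ∑ i ∈ Finset.range m,
      A i * ((if i + 1 = k then (1 : ℝ) else 0) - if i = k then (1 : ℝ) else 0) with hD
    have hderiv : HasDerivAt S D 0 := by
      rw [hS, hD]
      apply HasDerivAt.fun_sum
      intro i _
      set c2 : ℝ := if i + 1 = k then (1 : ℝ) else 0 with hc2
      set c1 : ℝ := if i = k then (1 : ℝ) else 0 with hc1
      have hrew : ∀ t : ℝ, (g t (i + 1) - g t i) / d = (f (i + 1) - f i + (c2 - c1) * t) / d := by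
        intro t
        simp only [hg, hc1, hc2]
        split_ifs <;> ring
      have hinner : HasDerivAt (fun t : ℝ => (g t (i + 1) - g t i) / d) ((c2 - c1) / d) 0 := by
        have : HasDerivAt (fun t : ℝ => (f (i + 1) - f i + (c2 - c1) * t) / d)
            ((c2 - c1) / d) 0 := by
          have h1 : HasDerivAt (fun t : ℝ => f (i + 1) - f i + (c2 - c1) * t) (c2 - c1) 0 := by
            simpa using ((hasDerivAt_id (0 : ℝ)).const_mul (c2 - c1)).const_add (f (i + 1) - f i)
          simpa using h1.div_const d
        exact this.congr_of_eventuallyEq (by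
          filter_upwards with t using hrew t)
      have hw0 : (g 0 (i + 1) - g 0 i) / d = (f (i + 1) - f i) / d := by
        simp [hg]
      have houter := (hσ (x i) (x (i + 1)) ((g 0 (i + 1) - g 0 i) / d)).comp 0 hinner
      have := houter.mul_const d
      have heq : σw (x i) (x (i + 1)) ((g 0 (i + 1) - g 0 i) / d) * ((c2 - c1) / d) * d
          = A i * (c2 - c1) := by
        rw [hw0, hA]
        field_simp
      rw [heq] at this
      exact this
    -- D = A j - A (j+1)
    have hDval : D = A j - A (j + 1) := by
      rw [hD]
      have : ∀ i ∈ Finset.range m,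
          A i * ((if i + 1 = k then (1 : ℝ) else 0) - if i = k then (1 : ℝ) else 0)
          = (if i = j then A i else 0) - (if i = k then A i else 0) := by
        intro i _
        have hik : (i + 1 = k) ↔ (i = j) := by omega
        simp only [hik]
        split_ifs <;> ring
      rw [Finset.sum_congr rfl this, Finset.sum_sub_distrib,
        Finset.sum_ite_eq' (Finset.range m) j A, Finset.sum_ite_eq' (Finset.range m) k A]
      rw [if_pos (Finset.mem_range.2 (by omega)), if_pos (Finset.mem_range.2 (by omega))]
    -- local extremum at 0
    have hg0 : ∀ t : ℝ, g t 0 = a := by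
      intro t; simp only [hg]; rw [if_neg (by omega : 0 ≠ k)]; simp [hfa]
    have hgm : ∀ t : ℝ, g t m = b := by
      intro t; simp only [hg]; rw [if_neg (by omega : m ≠ k)]; simp [hfb]
    have hclose : ∀ t : ℝ, |t| < ε → ∀ i, i ≤ m → |g t i - f i| < ε := by
      intro t ht i _
      simp only [hg]
      split_ifs <;> simp [ht, hε]
    have hD0 : D = 0 := by
      rcases hcase with h | h
      · have hmax : IsLocalMax S 0 := by
          filter_upwards [eventually_abs_sub_lt 0 hε] with t ht
          rw [hS0]
          exact h (g t) (hg0 t) (hgm t) (hclose t (by simpa using ht))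
        exact hmax.hasDerivAt_eq_zero hderiv
      · have hmin : IsLocalMin S 0 := by
          filter_upwards [eventually_abs_sub_lt 0 hε] with t ht
          rw [hS0]
          exact h (g t) (hg0 t) (hgm t) (hclose t (by simpa using ht))
        exact hmin.hasDerivAt_eq_zero hderiv
    have := hDval ▸ hD0
    linarith [sub_eq_zero.mp this]
  refine ⟨A 0, ?_⟩
  intro i hi
  induction i with
  | zero => rfl
  | succ n ih => exact (key n hi).symm.trans (ih (by omega))
end
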